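/- arXiv:cs/0605082 — 2 statements merged into one kernel-verified Lean document; each statement's English description precedes it below -/
import Mathlib

section
/- Let Q be a real quadratic form on ℝ^{k+1} with symmetric matrix M, and let det(M + T·I_{k+1}) = T^{k+1} + C_k T^k + ⋯ + C_0. Then the number of negative eigenvalues of M (counted with multiplicity) equals the number of sign variations in the sequence C_0, C_1, …, C_k, 1. -/
/-- The number of sign variations in a finite sequence of reals: delete the zeros, then
count consecutive pairs with opposite signs. -/
noncomputable def signVar (l : List ℝ) : ℕ :=
  let l' := l.filter (fun a => decide (a ≠ 0))
  (l'.zip l'.tail).countP (fun p => decide (p.1 * p.2 < 0))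

open Polynomial

namespace Desc
noncomputable def F (l : List ℝ) : List ℝ := l.filter (fun a => decide (a ≠ 0))
noncomputable def fz (l : List ℝ) : ℝ := (F l).headD 0

lemma sv_eq (l : List ℝ) :
    signVar l = ((F l).zip (F l).tail).countP (fun p => decide (p.1 * p.2 < 0)) := rfl

lemma F_cons (x : ℝ) (l : List ℝ) : F (x :: l) = if x = 0 then F l else x :: F l := by
  by_cases h : x = 0 <;> simp only [F, List.filter_cons] <;> simp [h]

lemma fz_cons (x : ℝ) (l : List ℝ) : fz (x :: l) = if x = 0 then fz l else x := by
  by_cases h : x = 0 <;> simp [fz, F_cons, h]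

lemma sv_nil : signVar [] = 0 := rfl

lemma sv_cons (x : ℝ) (l : List ℝ) :
    signVar (x :: l) = signVar l + (if x * fz l < 0 then 1 else 0) := by
  by_cases hx : x = 0
  · rw [sv_eq, sv_eq, F_cons, if_pos hx]
    simp [hx]
  · rw [sv_eq (x :: l), F_cons, if_neg hx]
    rcases hF : F l with _ | ⟨h, t⟩
    · have : fz l = 0 := by simp [fz, hF]
      simp [hF, sv_eq, this]
    · have hfz : fz l = h := by simp [fz, hF]
      rw [hfz, sv_eq, hF]
      simp only [List.zip_cons_cons, List.tail_cons, List.countP_cons]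
      by_cases hxh : x * h < 0 <;> simp [hxh, add_comm]

lemma fz_map_mul (c : ℝ) (hc : c ≠ 0) (l : List ℝ) :
    fz (l.map (fun y => c * y)) = c * fz l := by
  induction l with
  | nil => simp [fz, F]
  | cons x t ih =>
    by_cases hx : x = 0 <;>
      simp [fz_cons, hx, hc, mul_eq_zero, ← ih, fz_cons]

lemma sv_map_mul (c : ℝ) (hc : c ≠ 0) (l : List ℝ) :
    signVar (l.map (fun y => c * y)) = signVar l := by
  induction l with
  | nil => rfl
  | cons x t ih =>
    rw [List.map_cons, sv_cons, sv_cons, ih, fz_map_mul c hc]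
    congr 1
    have : c * x * (c * fz t) = c ^ 2 * (x * fz t) := by ring
    rw [this]
    have hc2 : 0 < c ^ 2 := by positivity
    by_cases h : x * fz t < 0
    · rw [if_pos h, if_pos (by nlinarith)]
    · rw [if_neg h, if_neg (by push_neg at h ⊢; nlinarith)]

lemma fz_neg (l : List ℝ) : fz (l.map Neg.neg) = - fz l := by
  have : l.map Neg.neg = l.map (fun y => (-1 : ℝ) * y) := by simp
  rw [this, fz_map_mul (-1) (by norm_num)]; ring

lemma sv_neg (l : List ℝ) : signVar (l.map Neg.neg) = signVar l := by
  have : l.map Neg.neg = l.map (fun y => (-1 : ℝ) * y) := by simp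
  rw [this, sv_map_mul (-1) (by norm_num)]

/-- negate entries in odd positions -/
def alt : List ℝ → List ℝ
  | [] => []
  | x :: t => x :: (alt t).map Neg.neg

lemma alt_nil : alt [] = [] := rfl
lemma alt_cons (x : ℝ) (l : List ℝ) : alt (x :: l) = x :: (alt l).map Neg.neg := rfl

lemma map_neg_alt_cons (x : ℝ) (l : List ℝ) :
    (alt (x :: l)).map Neg.neg = (-x) :: alt l := by
  simp only [alt_cons, List.map_cons, List.map_map]
  congr 1
  simp [Function.comp]

/-- key combinatorial bound: joint statement -/
lemma lemma3 (l : List ℝ) :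
    (∀ x : ℝ, x ≠ 0 →
      signVar (x :: l) + signVar (x :: (alt l).map Neg.neg) ≤ l.length) ∧
    (∀ x : ℝ, x ≠ 0 →
      signVar (x :: l) + signVar (x :: alt l) ≤ l.length + 1) := by
  induction l with
  | nil =>
    have fz_nil : fz [] = 0 := rfl
    constructor <;> intro x hx <;> simp [alt_nil, sv_cons, sv_nil, fz_nil]
  | cons y m ih =>
    obtain ⟨ihB, ihA⟩ := ih
    by_cases hy : y = 0
    · subst hy
      constructor <;> intro x hx
      · -- B(x, 0::m) = A(x, m)
        have h1 : signVar (x :: 0 :: m) = signVar (x :: m) := by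
          rw [sv_cons x (0 :: m), sv_cons 0 m, sv_cons x m, fz_cons]
          simp
        have h2 : (alt (0 :: m)).map Neg.neg = 0 :: alt m := by
          rw [map_neg_alt_cons]; norm_num
        have h3 : signVar (x :: (alt (0 :: m)).map Neg.neg) = signVar (x :: alt m) := by
          rw [h2, sv_cons x (0 :: alt m), sv_cons 0 (alt m), sv_cons x (alt m), fz_cons]
          simp
        rw [h1, h3]
        simpa using ihA x hx
      · -- A(x, 0::m) = B(x, m)
        have h1 : signVar (x :: 0 :: m) = signVar (x :: m) := by
          rw [sv_cons x (0 :: m), sv_cons 0 m, sv_cons x m, fz_cons]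
          simp
        have h3 : signVar (x :: alt (0 :: m)) = signVar (x :: (alt m).map Neg.neg) := by
          rw [alt_cons, sv_cons x (0 :: (alt m).map Neg.neg), sv_cons 0 ((alt m).map Neg.neg),
            sv_cons x ((alt m).map Neg.neg), fz_cons]
          simp
        rw [h1, h3]
        have := ihB x hx
        simp only [List.length_cons]
        omega
    · constructor <;> intro x hx
      · -- B(x, y::m) = B(y, m) + 1
        have e1 : signVar (x :: y :: m) = signVar (y :: m) + (if x * y < 0 then 1 else 0) := by
          rw [sv_cons x, fz_cons, if_neg hy]
        have e2 : (alt (y :: m)).map Neg.neg = (-y) :: alt m := map_neg_alt_cons y m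
        have e3 : signVar (x :: (-y) :: alt m) =
            signVar ((-y) :: alt m) + (if x * y > 0 then 1 else 0) := by
          rw [sv_cons x ((-y) :: alt m), fz_cons, if_neg (show ¬(-y) = 0 by simpa using hy)]
          congr 1
          have : x * -y < 0 ↔ x * y > 0 := by constructor <;> intro <;> nlinarith
          rw [if_congr this rfl rfl]
        have e4 : signVar ((-y) :: alt m) = signVar (y :: (alt m).map Neg.neg) := by
          have : (-y) :: alt m = ((y :: (alt m).map Neg.neg).map Neg.neg) := by
            simp [List.map_map, Function.comp]
          rw [this, sv_neg]
        have hcase : (if x * y < 0 then (1:ℕ) else 0) + (if x * y > 0 then 1 else 0) = 1 := by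
          rcases lt_trichotomy (x * y) 0 with h | h | h
          · simp [h, asymm h]
          · exact absurd (mul_eq_zero.mp h) (by push_neg; exact ⟨hx, hy⟩)
          · simp [h, asymm h]
        rw [e1, e2, e3, e4]
        have := ihB y hy
        simp only [List.length_cons]
        omega
      · -- A(x, y::m) = B(y, m) + 2·[xy<0]
        have e1 : signVar (x :: y :: m) = signVar (y :: m) + (if x * y < 0 then 1 else 0) := by
          rw [sv_cons x, fz_cons, if_neg hy]
        have e3 : signVar (x :: alt (y :: m)) =
            signVar (y :: (alt m).map Neg.neg) + (if x * y < 0 then 1 else 0) := by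
          rw [alt_cons, sv_cons x, fz_cons, if_neg hy]
        rw [e1, e3]
        have := ihB y hy
        have hind : (if x * y < 0 then (1:ℕ) else 0) ≤ 1 := by split <;> omega
        simp only [List.length_cons]
        omega


/-- add `x` to the constant (head) coefficient -/
def addC (x : ℝ) : List ℝ → List ℝ
  | [] => [x]
  | y :: t => (x + y) :: t

/-- coefficient list of `(X - a) * p` where `l` is the coefficient list of `p` -/
def mulL (a : ℝ) : List ℝ → List ℝ
  | [] => []
  | x :: t => (-a * x) :: addC x (mulL a t)

lemma mulL_ne_nil (a : ℝ) (l : List ℝ) (h : l ≠ []) : mulL a l ≠ [] := by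
  cases l with
  | nil => exact absurd rfl h
  | cons x t => simp [mulL]

/-- Descartes' key lemma, list form -/
lemma L2list (a : ℝ) (ha : 0 < a) :
    ∀ l : List ℝ, ∀ hne : l ≠ [], l.getLast hne ≠ 0 →
      signVar l + 1 ≤ signVar (mulL a l) ∧ fz (mulL a l) * fz l < 0 := by
  intro l
  induction l with
  | nil => intro h; exact absurd rfl h
  | cons x t ih =>
    intro hne hlast
    by_cases hx : x = 0
    · -- head zero case
      subst hx
      have ht : t ≠ [] := by
        rintro rfl
        exact hlast (by simp)
      have hlt : t.getLast ht ≠ 0 := by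
        rwa [List.getLast_cons ht] at hlast
      obtain ⟨ih1, ih2⟩ := ih ht hlt
      have hmt : mulL a t ≠ [] := mulL_ne_nil a t ht
      have e0 : mulL a (0 :: t) = 0 :: mulL a t := by
        cases hmm : mulL a t with
        | nil => exact absurd hmm hmt
        | cons z w => simp [mulL, addC, hmm]
      constructor
      · rw [e0, sv_cons 0 t, sv_cons 0 (mulL a t)]
        simpa using ih1
      · rw [e0, fz_cons, fz_cons]
        simpa using ih2
    · rcases ht : t with _ | ⟨c1, t'⟩
      · -- singleton
        subst ht
        have fz_nil : fz [] = 0 := rfl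
        have hneg : (-a * x) * x < 0 := by nlinarith [mul_self_pos.mpr hx]
        have hax : (-a * x) ≠ 0 := mul_ne_zero (neg_ne_zero.mpr (ne_of_gt ha)) hx
        constructor
        · show signVar [x] + 1 ≤ signVar [-a * x, x]
          have h1 : signVar [x] = 0 := by rw [sv_cons x [], sv_nil, fz_nil]; simp
          have h2 : signVar [-a * x, x] = 1 := by
            rw [sv_cons (-a*x) [x], sv_cons x [], sv_nil, fz_nil, fz_cons, if_neg hx, if_pos hneg]
            simp
          omega
        · show fz [-a * x, x] * fz [x] < 0
          rw [fz_cons, fz_cons, if_neg hax, if_neg hx]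
          exact hneg
      · -- main case
        subst ht
        have ht' : (c1 :: t') ≠ [] := by simp
        have hlt : (c1 :: t').getLast ht' ≠ 0 := by
          rwa [List.getLast_cons ht'] at hlast
        obtain ⟨ih1, ih2⟩ := ih ht' hlt
        -- structure of the product list
        set dt := addC c1 (mulL a t') with hdt
        have hd' : mulL a (c1 :: t') = (-a * c1) :: dt := by rw [hdt]; rfl
        have hd : mulL a (x :: c1 :: t') = (-a * x) :: (x + -a * c1) :: dt := by
          show (-a * x) :: addC x (mulL a (c1 :: t')) = _
          rw [hd']
          rfl
        set u := fz dt with hu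
        set s := fz (c1 :: t') with hs
        have hs' : s ≠ 0 ∧ fz (mulL a (c1 :: t')) * s < 0 := by
          refine ⟨?_, ih2⟩
          intro h0
          rw [h0, mul_zero] at ih2
          exact lt_irrefl 0 ih2
        obtain ⟨hsne, -⟩ := hs'
        -- goal 2 first
        have hax : (-a * x) ≠ 0 := mul_ne_zero (neg_ne_zero.mpr (ne_of_gt ha)) hx
        have goal2 : fz (mulL a (x :: c1 :: t')) * fz (x :: c1 :: t') < 0 := by
          rw [hd, fz_cons, if_neg hax, fz_cons, if_neg hx]
          nlinarith [mul_self_pos.mpr hx]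
        refine ⟨?_, goal2⟩
        -- expand signVar values
        have hVx : signVar (x :: c1 :: t') =
            signVar (c1 :: t') + (if x * s < 0 then 1 else 0) := by
          rw [sv_cons x, hs]
        have hVd' : signVar (mulL a (c1 :: t')) =
            signVar dt + (if (-a * c1) * u < 0 then 1 else 0) := by
          rw [hd', sv_cons, hu]
        have hfzd' : fz (mulL a (c1 :: t')) = if c1 = 0 then u else -a * c1 := by
          rcases eq_or_ne c1 0 with h | h
          · rw [hd', fz_cons, if_pos (by rw [h]; ring), if_pos h, hu]
          · rw [hd', fz_cons, if_neg (mul_ne_zero (neg_ne_zero.mpr (ne_of_gt ha)) h), if_neg h]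
        have hVd : signVar (mulL a (x :: c1 :: t')) =
            signVar ((x + -a * c1) :: dt) + (if x * fz ((x + -a * c1) :: dt) > 0 then 1 else 0) := by
          rw [hd, sv_cons (-a*x)]
          congr 1
          have hiff : (-a * x) * fz ((x + -a * c1) :: dt) < 0 ↔ 0 < x * fz ((x + -a * c1) :: dt) := by
            constructor <;> intro h <;> nlinarith
          rw [if_congr hiff rfl rfl]
        have hVw : signVar ((x + -a * c1) :: dt) =
            signVar dt + (if (x + -a * c1) * u < 0 then 1 else 0) := by
          rw [sv_cons, ← hu]
        have hfzw : fz ((x + -a * c1) :: dt) = if x + -a * c1 = 0 then u else x + -a * c1 := by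
          rw [fz_cons, ← hu]
        rw [hVx, hVd, hVw, hfzw]
        rw [hVd'] at ih1
        by_cases hc1 : c1 = 0
        · subst hc1
          have hfz0 : fz (mulL a ((0:ℝ) :: t')) = u := by rw [hfzd']; simp
          rw [hfz0] at ih2
          have e1 : (-a * 0) * u = 0 := by ring
          rw [e1, if_neg (lt_irrefl (0:ℝ))] at ih1
          have ex : x + -a * 0 = x := by ring
          rw [ex, if_neg hx, if_pos (mul_self_pos.mpr hx)]
          split_ifs <;> omega
        · have hsc : s = c1 := by rw [hs, fz_cons, if_neg hc1]
          rw [hsc]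
          have hiu : ((-a * c1) * u < 0) ↔ 0 < c1 * u := by
            have e : (-a * c1) * u = -(a * (c1 * u)) := by ring
            rw [e, neg_lt_zero]
            constructor
            · intro h'; nlinarith
            · intro h'; exact mul_pos ha h'
          simp only [hiu] at ih1
          by_cases hxc : x * c1 < 0
          · rw [if_pos hxc]
            have hw : 0 < x * (x + -a * c1) := by
              nlinarith [mul_self_pos.mpr hx, mul_pos ha (neg_pos.mpr hxc)]
            have hwne : x + -a * c1 ≠ 0 := by
              intro h0; rw [h0, mul_zero] at hw; exact lt_irrefl _ hw
            rw [if_neg hwne, if_pos hw]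
            have key : 0 < c1 * u → (x + -a * c1) * u < 0 := by
              intro hcu
              nlinarith [mul_pos ha hcu, mul_neg_of_neg_of_pos hxc hcu, mul_self_pos.mpr hc1]
            by_cases hcu : 0 < c1 * u
            · rw [if_pos hcu] at ih1; rw [if_pos (key hcu)]; omega
            · rw [if_neg hcu] at ih1; split_ifs <;> omega
          · rw [if_neg hxc]
            have hxc2 : 0 < x * c1 :=
              lt_of_le_of_ne (not_lt.mp hxc) (Ne.symm (mul_ne_zero hx hc1))
            by_cases hw0 : x + -a * c1 = 0
            · rw [if_pos hw0, hw0, zero_mul, if_neg (lt_irrefl (0:ℝ))]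
              have hiff : (0 < c1 * u) ↔ (0 < x * u) := by
                constructor
                · intro h'; nlinarith [mul_pos hxc2 h', mul_self_pos.mpr hc1]
                · intro h'; nlinarith [mul_pos hxc2 h', mul_self_pos.mpr hx]
              simp only [← hiff]
              by_cases hcu : 0 < c1 * u
              · rw [if_pos hcu] at ih1 ⊢; omega
              · rw [if_neg hcu] at ih1 ⊢; omega
            · rw [if_neg hw0]
              by_cases hxw : 0 < x * (x + -a * c1)
              · rw [if_pos hxw]; split_ifs at ih1 ⊢ <;> omega
              · rw [if_neg hxw]
                have hxw2 : x * (x + -a * c1) < 0 :=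
                  lt_of_le_of_ne (not_lt.mp hxw) (Ne.symm (mul_ne_zero hx hw0)).symm
                have key : 0 < c1 * u → (x + -a * c1) * u < 0 := by
                  intro hcu
                  nlinarith [mul_neg_of_neg_of_pos hxw2 hcu, hxc2, mul_pos hxc2 hcu]
                by_cases hcu : 0 < c1 * u
                · rw [if_pos hcu] at ih1; rw [if_pos (key hcu)]; omega
                · rw [if_neg hcu] at ih1; split_ifs <;> omega


/-- coefficient list of a polynomial, from constant to leading coefficient -/
noncomputable def cList (p : ℝ[X]) : List ℝ :=
  List.ofFn (fun i : Fin (p.natDegree + 1) => p.coeff i)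

lemma cList_eq_ofFn (p : ℝ[X]) (n : ℕ) (h : p.natDegree = n) :
    cList p = List.ofFn (fun i : Fin (n + 1) => p.coeff i) := by
  subst h; rfl

lemma cList_C (c : ℝ) : cList (C c) = [c] := by
  rw [cList_eq_ofFn (C c) 0 (natDegree_C c)]
  simp

lemma cList_cons (c : ℝ) (g : ℝ[X]) (hg : g ≠ 0) :
    cList (C c + X * g) = c :: cList g := by
  have hdeg : (C c + X * g).natDegree = g.natDegree + 1 := by
    rw [natDegree_add_eq_right_of_natDegree_lt, natDegree_X_mul hg]
    rw [natDegree_X_mul hg, natDegree_C]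
    omega
  rw [cList_eq_ofFn _ (g.natDegree + 1) hdeg]
  rw [List.ofFn_succ]
  congr 1
  · simp
  · unfold cList
    congr 1
    funext i
    simp [coeff_X_mul, coeff_C]

lemma cList_length (p : ℝ[X]) : (cList p).length = p.natDegree + 1 := by
  simp [cList]

lemma cList_ne_nil (p : ℝ[X]) : cList p ≠ [] := by
  have := cList_length p
  intro h; rw [h] at this; simp at this

lemma cList_getLast (p : ℝ[X]) (h : cList p ≠ []) : (cList p).getLast h = p.leadingCoeff := by
  rw [List.getLast_eq_getElem]
  simp only [cList, List.getElem_ofFn, List.length_ofFn, leadingCoeff,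
    Nat.add_sub_cancel]


/-- `cList` of `(X - C a) * f` is `mulL a` of `cList f`. -/
lemma cList_mulL (a : ℝ) (f : ℝ[X]) (hf : f ≠ 0) :
    cList ((X - C a) * f) = mulL a (cList f) := by
  generalize hn : f.natDegree = n
  induction n generalizing f with
  | zero =>
    obtain ⟨c, rfl⟩ := natDegree_eq_zero.mp hn
    have hc : c ≠ 0 := fun h => hf (by rw [h, map_zero])
    have e : (X - C a) * C c = C (-a * c) + X * C c := by rw [C_mul, C_neg]; ring
    rw [e, cList_cons _ _ (fun h => hc (by simpa using h))]
    simp only [cList_C]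
    rfl
  | succ n ihn =>
    set g := f.divX with hgdef
    have hg : g ≠ 0 := by
      intro h0
      have hfc : f = C (f.coeff 0) := divX_eq_zero_iff.mp h0
      rw [hfc, natDegree_C] at hn
      exact absurd hn (by omega)
    have hfg : f = C (f.coeff 0) + X * g := by
      rw [hgdef, add_comm, X_mul_divX_add]
    have hgdeg : g.natDegree = n := by
      have := natDegree_divX_eq_natDegree_tsub_one (p := f)
      rw [hn] at this
      simpa using this
    set c0 := f.coeff 0 with hc0
    have e1 : (X - C a) * f = C (-a * c0) + X * (C c0 + (X - C a) * g) := by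
      conv_lhs => rw [hfg]
      rw [C_mul, C_neg]; ring
    have hXg : (X - C a) * g ≠ 0 := mul_ne_zero (X_sub_C_ne_zero a) hg
    have hXgdeg : ((X - C a) * g).natDegree = n + 1 := by
      rw [natDegree_mul (X_sub_C_ne_zero a) hg, natDegree_X_sub_C, hgdeg]
      omega
    have h2deg : (C c0 + (X - C a) * g).natDegree = n + 1 := by
      rw [natDegree_add_eq_right_of_natDegree_lt, hXgdeg]
      rw [natDegree_C, hXgdeg]; omega
    have h2ne : C c0 + (X - C a) * g ≠ 0 := by
      intro h0; rw [h0, natDegree_zero] at h2deg; omega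
    set d0 := ((X - C a) * g).coeff 0 with hd0
    have hw0 : (X - C a) * g = C d0 + X * ((X - C a) * g).divX := by
      rw [add_comm, X_mul_divX_add]
    have hwne : ((X - C a) * g).divX ≠ 0 := by
      intro h0
      have h1 := divX_eq_zero_iff.mp h0
      rw [h1, natDegree_C] at hXgdeg; omega
    have e2 : C c0 + (X - C a) * g = C (c0 + d0) + X * ((X - C a) * g).divX := by
      conv_lhs => rw [hw0]
      rw [← add_assoc, ← C_add]
    calc cList ((X - C a) * f)
        = (-a * c0) :: cList (C c0 + (X - C a) * g) := by rw [e1, cList_cons _ _ h2ne]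
      _ = (-a * c0) :: (c0 + d0) :: cList (((X - C a) * g).divX) := by
            rw [e2, cList_cons _ _ hwne]
      _ = (-a * c0) :: addC c0 (cList ((X - C a) * g)) := by
            conv_rhs => rw [hw0, cList_cons _ _ hwne]
            rfl
      _ = (-a * c0) :: addC c0 (mulL a (cList g)) := by rw [ihn g hg hgdeg]
      _ = mulL a (c0 :: cList g) := rfl
      _ = mulL a (cList f) := by rw [← cList_cons c0 g hg, ← hfg]

lemma L2poly (a : ℝ) (ha : 0 < a) (f : ℝ[X]) (hf : f ≠ 0) :
    signVar (cList f) + 1 ≤ signVar (cList ((X - C a) * f)) := by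
  rw [cList_mulL a f hf]
  exact (L2list a ha (cList f) (cList_ne_nil f)
    (by rw [cList_getLast]; exact leadingCoeff_ne_zero.mpr hf)).1

lemma chain (T : Multiset ℝ) (hT : ∀ b ∈ T, 0 < b) (f : ℝ[X]) (hf : f ≠ 0) :
    signVar (cList f) + Multiset.card T ≤
      signVar (cList ((T.map (fun r => X - C r)).prod * f)) := by
  induction T using Multiset.induction_on with
  | empty => simp
  | cons a T ih =>
    have ha : 0 < a := hT a (Multiset.mem_cons_self a T)
    have hT' : ∀ b ∈ T, 0 < b := fun b hb => hT b (Multiset.mem_cons_of_mem hb)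
    have hmono : ((T.map (fun r => X - C r)).prod).Monic :=
      monic_multiset_prod_of_monic _ _ (fun i _ => monic_X_sub_C i)
    have hne : (T.map (fun r => X - C r)).prod * f ≠ 0 := mul_ne_zero hmono.ne_zero hf
    have h1 := L2poly a ha _ hne
    have h2 := ih hT'
    rw [Multiset.map_cons, Multiset.prod_cons, mul_assoc]
    rw [Multiset.card_cons]
    omega

lemma coeff_comp_neg_X (p : ℝ[X]) (n : ℕ) :
    (p.comp (-X)).coeff n = (-1)^n * p.coeff n := by
  induction p using Polynomial.induction_on' with
  | add p q hp hq => simp [add_comp, hp, hq, mul_add]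
  | monomial k c =>
    rw [← C_mul_X_pow_eq_monomial, mul_comp, C_comp, X_pow_comp]
    have e : ((-X : ℝ[X]))^k = C ((-1:ℝ)^k) * X^k := by
      rw [neg_pow]
      congr 1
      simp [map_pow]
    rw [e, ← mul_assoc, ← C_mul, coeff_C_mul, coeff_C_mul, coeff_X_pow]
    by_cases h : n = k <;> simp [h, coeff_C_mul, coeff_X_pow] <;> ring

lemma natDegree_comp_neg_X (p : ℝ[X]) : (p.comp (-X)).natDegree = p.natDegree := by
  rw [natDegree_comp]
  simp

lemma alt_ofFn (n : ℕ) (f : Fin n → ℝ) :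
    alt (List.ofFn f) = List.ofFn (fun i => (-1)^(i : ℕ) * f i) := by
  induction n with
  | zero => simp [alt]
  | succ n ih =>
    rw [List.ofFn_succ, alt_cons, ih, List.ofFn_succ, List.map_ofFn]
    congr 1
    · simp
    · congr 1
      funext i
      simp only [Function.comp_apply, Fin.val_succ, pow_succ]
      ring

lemma cList_comp_neg_X (p : ℝ[X]) : cList (p.comp (-X)) = alt (cList p) := by
  rw [cList_eq_ofFn (p.comp (-X)) p.natDegree (natDegree_comp_neg_X p), cList, alt_ofFn]
  congr 1
  funext i
  rw [coeff_comp_neg_X]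

lemma cList_C_mul (c : ℝ) (hc : c ≠ 0) (f : ℝ[X]) (hf : f ≠ 0) :
    cList (C c * f) = (cList f).map (fun y => c * y) := by
  have hdeg : (C c * f).natDegree = f.natDegree := by
    rw [natDegree_C_mul hc]
  rw [cList_eq_ofFn _ _ hdeg, cList, List.map_ofFn]
  congr 1
  funext i
  simp [coeff_C_mul, Function.comp]

lemma cList_X_mul (f : ℝ[X]) (hf : f ≠ 0) : cList (X * f) = 0 :: cList f := by
  have e : X * f = C 0 + X * f := by rw [map_zero, zero_add]
  conv_lhs => rw [e, cList_cons 0 f hf]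

lemma cList_X_pow_mul (m : ℕ) (f : ℝ[X]) (hf : f ≠ 0) :
    cList (X^m * f) = List.replicate m 0 ++ cList f := by
  induction m generalizing f with
  | zero => simp
  | succ m ih =>
    have hXf : X * f ≠ 0 := mul_ne_zero X_ne_zero hf
    have e : X^(m+1) * f = X^m * (X * f) := by ring
    rw [e, ih (X * f) hXf, cList_X_mul f hf, List.replicate_succ',
      List.append_assoc]
    rfl

lemma sv_replicate_zero (m : ℕ) (l : List ℝ) :
    signVar (List.replicate m 0 ++ l) = signVar l := by
  induction m with
  | zero => simp
  | succ m ih =>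
    rw [List.replicate_succ, List.cons_append, sv_cons, ih]
    simp

lemma sv_alt_replicate_zero (m : ℕ) (l : List ℝ) :
    signVar (alt (List.replicate m 0 ++ l)) = signVar (alt l) := by
  induction m with
  | zero => simp
  | succ m ih =>
    rw [List.replicate_succ, List.cons_append, alt_cons, sv_cons, sv_neg, ih]
    simp

lemma coeff_zero_prod (T : Multiset ℝ) :
    ((T.map fun r => X - C r).prod).coeff 0 = (T.map fun r => -r).prod := by
  induction T using Multiset.induction_on with
  | empty => simp
  | cons a T ih =>
    simp only [Multiset.map_cons, Multiset.prod_cons, mul_coeff_zero, ih]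
    simp

lemma natDegree_prod_lin (T : Multiset ℝ) :
    ((T.map fun r => X - C r).prod).natDegree = Multiset.card T := by
  rw [natDegree_multiset_prod_of_monic _ (fun f hf => by
    obtain ⟨r, _, rfl⟩ := Multiset.mem_map.mp hf
    exact monic_X_sub_C r)]
  rw [Multiset.map_map]
  have : (T.map (natDegree ∘ fun r => X - C r)) = T.map (fun _ => 1) := by
    apply Multiset.map_congr rfl
    intro r _
    simp [natDegree_X_sub_C]
  rw [this]
  simp [Multiset.map_const']

lemma prod_comp_neg (S : Multiset ℝ) :
    ((S.map fun r => X - C r).prod).comp (-X) =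
      C ((-1:ℝ)^(Multiset.card S)) * ((S.map fun r => X - C (-r)).prod) := by
  induction S using Multiset.induction_on with
  | empty => simp
  | cons a S ih =>
    rw [Multiset.map_cons, Multiset.prod_cons, mul_comp, ih, sub_comp, X_comp, C_comp,
      Multiset.map_cons, Multiset.prod_cons, Multiset.card_cons]
    have hC : (C ((-1:ℝ)^(Multiset.card S + 1)) : ℝ[X]) = C ((-1:ℝ)^Multiset.card S) * (-1) := by
      rw [pow_succ, C_mul]
      simp
    rw [hC, C_neg]
    ring

lemma P_monic (T : Multiset ℝ) : ((T.map fun r => X - C r).prod).Monic :=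
  monic_multiset_prod_of_monic _ _ (fun i _ => monic_X_sub_C i)

lemma P_add (T1 T2 : Multiset ℝ) :
    (((T1 + T2).map fun r => X - C r)).prod =
      ((T1.map fun r => X - C r)).prod * ((T2.map fun r => X - C r)).prod := by
  rw [Multiset.map_add, Multiset.prod_add]

theorem mainPoly (S : Multiset ℝ) :
    signVar (cList ((S.map fun r => X - C r).prod)) =
      Multiset.countP (fun r => 0 < r) S := by
  classical
  set A := S.filter (fun r => 0 < r) with hA
  set N := S.filter (fun r => ¬ 0 < r) with hN
  set W := N.filter (fun r => r < 0) with hW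
  set Z := N.filter (fun r => ¬ r < 0) with hZ
  have h1 : A + N = S := Multiset.filter_add_not _ S
  have h2 : W + Z = N := Multiset.filter_add_not _ N
  have hApos : ∀ b ∈ A, 0 < b := fun b hb => (Multiset.mem_filter.mp hb).2
  have hWneg : ∀ b ∈ W, b < 0 := fun b hb => (Multiset.mem_filter.mp hb).2
  have hZzero : ∀ b ∈ Z, b = 0 := by
    intro b hb
    have h3 := (Multiset.mem_filter.mp hb).2
    have h4 := (Multiset.mem_filter.mp (Multiset.mem_of_mem_filter hb)).2
    push_neg at h3 h4
    linarith
  set p := (S.map fun r => X - C r).prod with hp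
  set q := (((A + W).map fun r => X - C r)).prod with hq
  set m := Multiset.card Z with hm
  -- p = X^m * q
  have hPZ : ((Z.map fun r => X - C r)).prod = X ^ m := by
    have e : Z.map (fun r => X - C r) = Z.map (fun _ => X) :=
      Multiset.map_congr rfl (fun r hr => by rw [hZzero r hr]; simp)
    rw [e, Multiset.map_const', Multiset.prod_replicate]
  have hSsum : (A + W) + Z = S := by
    rw [add_assoc, h2, h1]
  have hpq : p = X ^ m * q := by
    rw [hp, ← hSsum, P_add, P_add, hPZ, hq, P_add]
    ring
  have hqne : q ≠ 0 := (P_monic _).ne_zero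
  have hq0 : q.coeff 0 ≠ 0 := by
    rw [hq, coeff_zero_prod]
    apply Multiset.prod_ne_zero
    intro h0
    obtain ⟨r, hr, hr0⟩ := Multiset.mem_map.mp h0
    have hr00 : r = 0 := by linarith [neg_eq_zero.mp hr0]
    rcases Multiset.mem_add.mp hr with h | h
    · exact absurd hr00 (hApos r h).ne'
    · exact absurd hr00 (hWneg r h).ne
  have hqdeg : q.natDegree = Multiset.card A + Multiset.card W := by
    rw [hq, natDegree_prod_lin, Multiset.card_add]
  -- reductions of signVar through the X^m factor
  have hV1 : signVar (cList p) = signVar (cList q) := by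
    rw [hpq, cList_X_pow_mul m q hqne, sv_replicate_zero]
  have hV2 : signVar (alt (cList p)) = signVar (alt (cList q)) := by
    rw [hpq, cList_X_pow_mul m q hqne, sv_alt_replicate_zero]
  -- lower bound 1
  have hlow1 : Multiset.card A ≤ signVar (cList p) := by
    have hSA : S = A + (W + Z) := by rw [← add_assoc, hSsum]
    have hne : ((W + Z).map (fun r => X - C r)).prod ≠ 0 := (P_monic _).ne_zero
    have := chain A hApos _ hne
    rw [← P_add, ← hSA, ← hp] at this
    omega
  -- lower bound 2, via p.comp (-X)
  have haltp : alt (cList p) = cList (p.comp (-X)) := (cList_comp_neg_X p).symm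
  have hcomp : p.comp (-X) =
      C ((-1:ℝ)^(Multiset.card S)) * (((S.map Neg.neg).map fun r => X - C r)).prod := by
    rw [hp, prod_comp_neg, Multiset.map_map]
    rfl
  have hVcomp : signVar (alt (cList p)) =
      signVar (cList (((S.map Neg.neg).map fun r => X - C r).prod)) := by
    rw [haltp, hcomp, cList_C_mul _ (by positivity) _ (P_monic _).ne_zero,
      sv_map_mul _ (by positivity)]
  have hlow2 : Multiset.card W ≤ signVar (alt (cList p)) := by
    set S' := S.map Neg.neg with hS'
    set A' := S'.filter (fun r => 0 < r) with hA'
    have hsplit' : A' + S'.filter (fun r => ¬ 0 < r) = S' := Multiset.filter_add_not _ S'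
    have hApos' : ∀ b ∈ A', 0 < b := fun b hb => (Multiset.mem_filter.mp hb).2
    have hne' : ((S'.filter (fun r => ¬ 0 < r)).map (fun r => X - C r)).prod ≠ 0 :=
      (P_monic _).ne_zero
    have hch := chain A' hApos' _ hne'
    rw [← P_add, hsplit'] at hch
    have hcard : Multiset.card W ≤ Multiset.card A' := by
      have e1 : Multiset.card A' = Multiset.countP (fun r => 0 < r) S' := by
        rw [hA', Multiset.countP_eq_card_filter]
      have e2 : Multiset.countP (fun r => 0 < r) S' =
          Multiset.countP (fun r => 0 < -r) S := by
        rw [hS', Multiset.countP_map, Multiset.countP_eq_card_filter]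
      have e3 : Multiset.card W = Multiset.countP (fun r => r < 0) N := by
        rw [hW, Multiset.countP_eq_card_filter]
      have e4 : Multiset.countP (fun r => r < 0) N ≤ Multiset.countP (fun r => r < 0) S := by
        rw [hN]
        exact Multiset.countP_le_of_le _ (Multiset.filter_le _ S)
      have e5 : Multiset.countP (fun r => 0 < -r) S = Multiset.countP (fun r => r < 0) S := by
        apply Multiset.countP_congr rfl
        intro x _
        simp
      omega
    rw [hVcomp]
    omega
  -- upper bound
  have hupper : signVar (cList q) + signVar (alt (cList q)) ≤
      Multiset.card A + Multiset.card W := by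
    have hlen : (cList q).length = q.natDegree + 1 := cList_length q
    rcases hcl : cList q with _ | ⟨x, rest⟩
    · exact absurd hcl (cList_ne_nil q)
    · have hx : x = q.coeff 0 := by
        have : (cList q).headD 0 = q.coeff 0 := by
          rw [cList_eq_ofFn q q.natDegree rfl, List.ofFn_succ]
          rfl
        rw [hcl] at this
        simpa using this
      have hxne : x ≠ 0 := by rw [hx]; exact hq0
      have hrest : rest.length = q.natDegree := by
        rw [hcl] at hlen
        simpa using hlen
      have hB := (lemma3 rest).1 x hxne
      rw [alt_cons]
      rw [hrest, hqdeg] at hB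
      exact hB
  rw [hV1] at hlow1
  rw [hV2] at hlow2
  have hcount : Multiset.countP (fun r => 0 < r) S = Multiset.card A := by
    rw [hA, Multiset.countP_eq_card_filter]
  rw [hV1, hcount]
  omega

open Matrix in
lemma charpoly_eval {n : ℕ} (A : Matrix (Fin n) (Fin n) ℝ) (x : ℝ) :
    (Matrix.charpoly A).eval x = (Matrix.scalar (Fin n) x - A).det := by
  rw [Matrix.charpoly, _root_.eval_det, Matrix.matPolyEquiv_charmatrix]
  rw [eval_sub, eval_X, eval_C]

open Matrix in
lemma det_scalar_sub {n : ℕ} (A : Matrix (Fin n) (Fin n) ℝ) (hA : A.IsHermitian) (x : ℝ) :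
    (Matrix.scalar (Fin n) x - A).det = ∏ i, (x - hA.eigenvalues i) := by
  set U : Matrix (Fin n) (Fin n) ℝ := (hA.eigenvectorUnitary : Matrix (Fin n) (Fin n) ℝ)
    with hUdef
  have hU : U * star U = 1 := Matrix.mem_unitaryGroup_iff.mp hA.eigenvectorUnitary.2
  set D : Matrix (Fin n) (Fin n) ℝ := Matrix.diagonal (RCLike.ofReal ∘ hA.eigenvalues) with hD
  have hscalar : Matrix.scalar (Fin n) x = x • (1 : Matrix (Fin n) (Fin n) ℝ) := by
    rw [Matrix.scalar_apply, ← Matrix.smul_one_eq_diagonal]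
  have key : Matrix.scalar (Fin n) x - A = U * (Matrix.scalar (Fin n) x - D) * star U := by
    rw [Matrix.mul_sub, Matrix.sub_mul]
    congr 1
    · rw [hscalar, Matrix.mul_smul, mul_one, Matrix.smul_mul, hU]
    · exact hA.spectral_theorem
  have hdetU : U.det * (star U).det = 1 := by rw [← Matrix.det_mul, hU, Matrix.det_one]
  have hdiag : (Matrix.scalar (Fin n) x - D).det = ∏ i, (x - hA.eigenvalues i) := by
    have e : Matrix.scalar (Fin n) x - D = Matrix.diagonal (fun i => x - hA.eigenvalues i) := by
      rw [Matrix.scalar_apply, hD, Matrix.diagonal_sub]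
      rfl
    rw [e, Matrix.det_diagonal]
  rw [key, Matrix.det_mul, Matrix.det_mul]
  calc U.det * (Matrix.scalar (Fin n) x - D).det * (star U).det
      = (Matrix.scalar (Fin n) x - D).det * (U.det * (star U).det) := by ring
    _ = ∏ i, (x - hA.eigenvalues i) := by rw [hdetU, mul_one, hdiag]
end Desc

open Desc in
/-- Descartes' rule of signs for the characteristic polynomial of a real symmetric matrix:
writing `det(M + T·I) = T^{k+1} + C_k T^k + ⋯ + C_0` (i.e. `det(M + T·I)` is the
characteristic polynomial of `-M`), the number of negative eigenvalues of `M`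
(with multiplicity) equals the number of sign variations of `C_0, …, C_k, 1`. -/
theorem stmt5 {k : ℕ} (M : Matrix (Fin (k + 1)) (Fin (k + 1)) ℝ) (hM : M.IsHermitian) :
    (Finset.univ.filter (fun i => hM.eigenvalues i < 0)).card =
      signVar (List.ofFn (fun i : Fin (k + 2) => ((-M).charpoly).coeff i)) := by
  classical
  set p : ℝ[X] := (-M).charpoly with hpdef
  have hdeg : p.natDegree = k + 1 := by
    rw [hpdef, Matrix.charpoly_natDegree_eq_dim, Fintype.card_fin]
  set S : Multiset ℝ := Finset.univ.val.map (fun i : Fin (k+1) => - hM.eigenvalues i) with hS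
  have hfact : p = (S.map fun r => X - C r).prod := by
    apply Polynomial.funext
    intro x
    rw [hpdef, charpoly_eval]
    have hL : Matrix.scalar (Fin (k+1)) x - (-M) = -(Matrix.scalar (Fin (k+1)) (-x) - M) := by
      rw [map_neg, sub_neg_eq_add]
      abel
    rw [hL, Matrix.det_neg, det_scalar_sub M hM (-x), Fintype.card_fin]
    rw [eval_multiset_prod, hS, Multiset.map_map, Multiset.map_map]
    have e : Finset.univ.val.map
        ((eval x ∘ fun r => X - C r) ∘ (fun i : Fin (k+1) => - hM.eigenvalues i))
        = Finset.univ.val.map (fun i : Fin (k+1) => x + hM.eigenvalues i) :=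
      Multiset.map_congr rfl (fun i _ => by simp)
    rw [e]
    have e2 : (Finset.univ.val.map (fun i : Fin (k+1) => x + hM.eigenvalues i)).prod
        = ∏ i, (x + hM.eigenvalues i) := rfl
    rw [e2]
    rw [show (∏ i, (-x - hM.eigenvalues i)) = ∏ i : Fin (k+1), (-1) * (x + hM.eigenvalues i) from
      Finset.prod_congr rfl (fun i _ => by ring)]
    rw [Finset.prod_mul_distrib, Finset.prod_const, Finset.card_univ, Fintype.card_fin]
    rw [show ((-1:ℝ))^(k+1) * (((-1:ℝ))^(k+1) * ∏ i, (x + hM.eigenvalues i))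
        = (((-1:ℝ))^(k+1))^2 * ∏ i, (x + hM.eigenvalues i) from by ring]
    rw [show (((-1:ℝ))^(k+1))^2 = 1 from by
      rw [← pow_mul]; exact Even.neg_one_pow ⟨k+1, by ring⟩, one_mul]
  have hlist : List.ofFn (fun i : Fin (k + 2) => p.coeff i) = Desc.cList p :=
    (Desc.cList_eq_ofFn p (k+1) hdeg).symm
  rw [hlist, hfact, Desc.mainPoly S]
  rw [hS, Multiset.countP_map]
  have hcnt : Multiset.card (Multiset.filter (fun i => 0 < - hM.eigenvalues i) Finset.univ.val)
      = (Finset.univ.filter (fun i => hM.eigenvalues i < 0)).card := by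
    rw [Multiset.filter_congr (fun x _ => neg_pos (a := hM.eigenvalues x))]
    rfl
  exact hcnt.symm
end

section
/- Let λ₀ ≤ λ₁ ≤ ⋯ ≤ λ_k be the eigenvalues of a real quadratic form Q on ℝ^{k+1}, and suppose λ_j ≥ 0 while λ_{j-1} < 0 (for some 0 ≤ j ≤ k, with the convention that the second condition is vacuous for j = 0). Then the set { x ∈ S^k : Q(x) ≥ 0 } is homotopy equivalent to the sphere S^{k−j}. -/
open Matrix Polynomial Finset


open Matrix Polynomial Finset

lemma charpoly_conj_aux {m : Type*} [Fintype m] [DecidableEq m] {R : Type*} [CommRing R]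
    (V W D : Matrix m m R) (hVW : V * W = 1) :
    (V * D * W).charpoly = D.charpoly := by
  have hC : ∀ A B : Matrix m m R,
      (C : R →+* R[X]).mapMatrix (A * B) = (C : R →+* R[X]).mapMatrix A * (C : R →+* R[X]).mapMatrix B :=
    fun A B => by simp
  have hscalar : Matrix.scalar m (X : R[X]) = (X : R[X]) • (1 : Matrix m m R[X]) := by
    ext i j
    by_cases h : i = j <;>
      simp [Matrix.scalar_apply, Matrix.diagonal_apply, Matrix.one_apply, h]
  have key : (C : R →+* R[X]).mapMatrix V * charmatrix D * (C : R →+* R[X]).mapMatrix W =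
      charmatrix (V * D * W) := by
    unfold charmatrix
    rw [mul_sub, sub_mul, mul_assoc _ _ ((C : R →+* R[X]).mapMatrix W), ← hC, ← hC]
    congr 1
    rw [hscalar, smul_mul_assoc, one_mul, mul_smul_comm, ← hC, hVW]
    simp
  rw [Matrix.charpoly, ← key, det_mul, det_mul, mul_right_comm, ← det_mul, ← hC, hVW]
  simp [Matrix.charpoly]

lemma charpoly_diagonal_aux {m : Type*} [Fintype m] [DecidableEq m] {R : Type*} [CommRing R]
    (d : m → R) : (diagonal d).charpoly = ∏ i, (X - C (d i)) := by
  have : charmatrix (diagonal d) = diagonal fun i => (X : R[X]) - C (d i) := by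
    ext i j
    by_cases h : i = j
    · subst h; simp [charmatrix_apply, Matrix.diagonal_apply]
    · simp [charmatrix_apply, Matrix.diagonal_apply, h]
  rw [Matrix.charpoly, this, det_diagonal]


open Matrix Polynomial Finset

lemma count_aux {n : ℕ} (f g : Fin n → ℝ)
    (h : ∏ i, (X - C (f i)) = ∏ i, (X - C (g i))) :
    (univ.filter fun i => 0 ≤ f i).card = (univ.filter fun i => 0 ≤ g i).card := by
  classical
  have hmul : Multiset.map f (univ.val : Multiset (Fin n))
      = Multiset.map g (univ.val : Multiset (Fin n)) := by
    have hf := Polynomial.roots_multiset_prod_X_sub_C (Multiset.map f (univ.val : Multiset (Fin n)))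
    have hg := Polynomial.roots_multiset_prod_X_sub_C (Multiset.map g (univ.val : Multiset (Fin n)))
    rw [Multiset.map_map] at hf hg
    rw [Finset.prod_eq_multiset_prod, Finset.prod_eq_multiset_prod] at h
    rw [← hf, ← hg]
    congr 1
  have cf : (univ.filter fun i => 0 ≤ f i).card
      = Multiset.countP (fun r : ℝ => 0 ≤ r) (Multiset.map f univ.val) := by
    rw [Multiset.countP_map]
    rfl
  have cg : (univ.filter fun i => 0 ≤ g i).card
      = Multiset.countP (fun r : ℝ => 0 ≤ r) (Multiset.map g univ.val) := by
    rw [Multiset.countP_map]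
    rfl
  rw [cf, cg, hmul]

lemma lam_count {k : ℕ} (lam : Fin (k + 1) → ℝ) (hmono : Monotone lam)
    (j : Fin (k + 1)) (hj : 0 ≤ lam j) (hj' : ∀ i, i < j → lam i < 0) :
    (univ.filter fun i => 0 ≤ lam i).card = k - (j : ℕ) + 1 := by
  have : (univ.filter fun i => 0 ≤ lam i) = Finset.Ici j := by
    ext i
    simp only [Finset.mem_filter, Finset.mem_univ, true_and, Finset.mem_Ici]
    constructor
    · intro hi
      by_contra hc
      exact absurd hi (not_le.mpr (hj' i (not_le.mp hc)))
    · intro hi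
      exact le_trans hj (hmono hi)
  rw [this, Fin.card_Ici]
  have := j.isLt
  omega


open Matrix Finset

lemma T_homeo {n m : ℕ} (ν : Fin n → ℝ)
    (hm : (Finset.univ.filter fun i => 0 ≤ ν i).card = m) :
    Nonempty (({x : Fin n → ℝ | (∀ i, ¬ 0 ≤ ν i → x i = 0) ∧ ∑ i, x i ^ 2 = 1} : Set _) ≃ₜ
      (Metric.sphere (0 : EuclideanSpace ℝ (Fin m)) 1)) := by
  classical
  set P : Finset (Fin n) := Finset.univ.filter fun i => 0 ≤ ν i with hP
  have memP : ∀ i, i ∈ P ↔ 0 ≤ ν i := by intro i; simp [hP]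
  let e : Fin m ≃ {i // i ∈ P} := (finCongr hm.symm).trans P.equivFin.symm
  have sphere_mem : ∀ y : EuclideanSpace ℝ (Fin m),
      y ∈ Metric.sphere (0 : EuclideanSpace ℝ (Fin m)) 1 ↔ ∑ a, y a ^ 2 = 1 := by
    intro y
    rw [EuclideanSpace.sphere_zero_eq 1 (by norm_num)]
    simp
  have sum_eq : ∀ x : Fin n → ℝ, (∀ i, ¬ 0 ≤ ν i → x i = 0) →
      ∑ a : Fin m, (x (e a).1) ^ 2 = ∑ i, x i ^ 2 := by
    intro x hx
    rw [Equiv.sum_comp e (fun b : {i // i ∈ P} => x b.1 ^ 2)]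
    rw [Finset.sum_coe_sort P (fun i => x i ^ 2)]
    refine Finset.sum_subset P.subset_univ fun i _ hi => ?_
    rw [hx i (by simpa [memP] using hi)]
    ring
  -- the inverse map's sum identity
  have sum_eq' : ∀ y : Fin m → ℝ,
      ∑ i : Fin n, (if h : i ∈ P then y (e.symm ⟨i, h⟩) else 0) ^ 2 = ∑ a, y a ^ 2 := by
    intro y
    rw [← Finset.sum_subset P.subset_univ (fun i _ hi => by rw [dif_neg hi]; ring)]
    rw [← Finset.sum_attach P fun i => (if h : i ∈ P then y (e.symm ⟨i, h⟩) else 0) ^ 2]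
    have : ∀ b : {i // i ∈ P},
        (if h : b.1 ∈ P then y (e.symm ⟨b.1, h⟩) else 0) ^ 2 = y (e.symm b) ^ 2 := by
      intro b; rw [dif_pos b.2]
    rw [Finset.sum_congr rfl fun b _ => this b, ← Finset.univ_eq_attach]
    exact Equiv.sum_comp e.symm fun a => y a ^ 2
  refine ⟨⟨⟨fun x => ⟨WithLp.toLp 2 (fun a => x.1 (e a).1), ?_⟩,
      fun y => ⟨fun i => if h : i ∈ P then y.1 (e.symm ⟨i, h⟩) else 0, ?_, ?_⟩, ?_, ?_⟩, ?_, ?_⟩⟩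
  · rw [sphere_mem]
    show ∑ a, x.1 (e a).1 ^ 2 = 1
    rw [sum_eq x.1 x.2.1, x.2.2]
  · intro i hi
    show (if h : i ∈ P then y.1 (e.symm ⟨i, h⟩) else 0) = 0
    exact dif_neg fun hmem => hi ((memP i).mp hmem)
  · rw [sum_eq' y.1]
    exact (sphere_mem y.1).mp y.2
  · -- left inverse
    intro x
    apply Subtype.ext
    funext i
    by_cases h : i ∈ P
    · simp only [dif_pos h]
      show x.1 (e (e.symm ⟨i, h⟩)).1 = x.1 i
      rw [Equiv.apply_symm_apply]
    · simp only [dif_neg h]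
      exact (x.2.1 i (by simpa [memP] using h)).symm
  · -- right inverse
    intro y
    apply Subtype.ext
    ext a
    show (if h : (e a).1 ∈ P then y.1 (e.symm ⟨(e a).1, h⟩) else 0) = y.1 a
    rw [dif_pos (e a).2]
    rw [show (⟨(e a).1, (e a).2⟩ : {i // i ∈ P}) = e a from rfl, Equiv.symm_apply_apply]
  · -- continuity of forward map
    apply Continuous.subtype_mk
    exact (PiLp.continuous_toLp 2 _).comp (continuous_pi fun a => (continuous_apply (e a).1).comp continuous_subtype_val)
  · -- continuity of inverse map
    apply Continuous.subtype_mk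
    apply continuous_pi
    intro i
    by_cases h : i ∈ P
    · simp only [dif_pos h]
      exact (continuous_apply _).comp ((PiLp.continuous_ofLp 2 _).comp continuous_subtype_val)
    · simp only [dif_neg h]
      exact continuous_const


open Matrix Finset

lemma A_htpy {n : ℕ} (ν : Fin n → ℝ) :
    Nonempty (ContinuousMap.HomotopyEquiv
      ({x : Fin n → ℝ | ∑ i, x i ^ 2 = 1 ∧ 0 ≤ ∑ i, ν i * x i ^ 2} : Set _)
      ({x : Fin n → ℝ | (∀ i, ¬ 0 ≤ ν i → x i = 0) ∧ ∑ i, x i ^ 2 = 1} : Set _)) := by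
  classical
  set A : Set (Fin n → ℝ) := {x | ∑ i, x i ^ 2 = 1 ∧ 0 ≤ ∑ i, ν i * x i ^ 2} with hA
  set T : Set (Fin n → ℝ) := {x | (∀ i, ¬ 0 ≤ ν i → x i = 0) ∧ ∑ i, x i ^ 2 = 1} with hT
  let c : ℝ → (Fin n → ℝ) → Fin n → ℝ := fun t x i => if 0 ≤ ν i then x i else (1 - t) * x i
  let S : ℝ → (Fin n → ℝ) → ℝ := fun t x => ∑ i, c t x i ^ 2
  let H : ℝ → (Fin n → ℝ) → Fin n → ℝ := fun t x i => c t x i / Real.sqrt (S t x)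
  -- S is positive on A
  have hS1 : ∀ x ∈ A, 0 < S 1 x := by
    intro x hx
    rcases lt_or_ge 0 (S 1 x) with h | h
    · exact h
    · exfalso
      have hzero : ∀ i, 0 ≤ ν i → x i = 0 := by
        intro i hi
        have h0 : S 1 x = 0 :=
          le_antisymm h (Finset.sum_nonneg fun i _ => sq_nonneg _)
        have := (Finset.sum_eq_zero_iff_of_nonneg fun i _ => sq_nonneg (c 1 x i)).mp h0 i
          (Finset.mem_univ i)
        have hc : c 1 x i = 0 := by
          have := sq_eq_zero_iff.mp this
          exact this
        simpa [c, hi] using hc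
      -- some coordinate is nonzero
      have hxne : ∃ i, x i ≠ 0 := by
        by_contra hcon
        push_neg at hcon
        have : (1 : ℝ) = 0 := by
          rw [← hx.1]
          exact Finset.sum_eq_zero fun i _ => by rw [hcon i]; ring
        norm_num at this
      obtain ⟨i₀, hi₀⟩ := hxne
      have hνneg : ν i₀ < 0 := by
        by_contra hcon
        exact hi₀ (hzero i₀ (not_lt.mp hcon))
      have hlt : ∑ i, ν i * x i ^ 2 < 0 := by
        have := Finset.sum_lt_sum (f := fun i => ν i * x i ^ 2) (g := fun _ => (0 : ℝ))
          (fun i _ => by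
            show ν i * x i ^ 2 ≤ (0:ℝ)
            rcases le_or_gt 0 (ν i) with h' | h'
            · rw [hzero i h']; simp
            · exact mul_nonpos_of_nonpos_of_nonneg h'.le (sq_nonneg _))
          ⟨i₀, Finset.mem_univ i₀, by
            have hx2 : 0 < x i₀ ^ 2 := by
              have := abs_pos.mpr hi₀
              calc (0:ℝ) < |x i₀| ^ 2 := pow_pos this 2
                _ = x i₀ ^ 2 := sq_abs _
            exact mul_neg_of_neg_of_pos hνneg hx2⟩
        simpa using this
      exact absurd hx.2 (not_le.mpr hlt)
  have hSt : ∀ (t : ℝ), ∀ x ∈ A, 0 < S t x := by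
    intro t x hx
    refine lt_of_lt_of_le (hS1 x hx) (Finset.sum_le_sum fun i _ => ?_)
    by_cases h : 0 ≤ ν i
    · simp [c, h]
    · simp only [c, if_neg h]
      nlinarith [sq_nonneg ((1 - t) * x i), sq_nonneg (x i)]
  -- sum of squares of H is 1
  have hsum : ∀ (t : ℝ), ∀ x ∈ A, ∑ i, H t x i ^ 2 = 1 := by
    intro t x hx
    have hpos := hSt t x hx
    simp only [H, div_pow, ← Finset.sum_div]
    rw [Real.sq_sqrt hpos.le]
    exact div_self (ne_of_gt hpos)
  -- quadratic form stays nonneg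
  have hQc : ∀ (t : ℝ), 0 ≤ t → t ≤ 1 → ∀ x ∈ A, 0 ≤ ∑ i, ν i * c t x i ^ 2 := by
    intro t ht0 ht1 x hx
    refine le_trans hx.2 (Finset.sum_le_sum fun i _ => ?_)
    by_cases h : 0 ≤ ν i
    · simp [c, h]
    · simp only [c, if_neg h]
      have h1 : ((1 - t) * x i) ^ 2 ≤ x i ^ 2 := by
        rw [mul_pow]
        have h2 : (1 - t) ^ 2 ≤ 1 := by nlinarith
        nlinarith [sq_nonneg (x i)]
      exact mul_le_mul_of_nonpos_left h1 (not_le.mp h).le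
  have hQ : ∀ (t : ℝ), 0 ≤ t → t ≤ 1 → ∀ x ∈ A, 0 ≤ ∑ i, ν i * H t x i ^ 2 := by
    intro t ht0 ht1 x hx
    have hpos := hSt t x hx
    simp only [H, div_pow, ← mul_div_assoc, ← Finset.sum_div]
    exact div_nonneg (hQc t ht0 ht1 x hx) (by positivity)
  -- H t x ∈ A for t ∈ [0,1]
  have hmemA : ∀ (t : ℝ), 0 ≤ t → t ≤ 1 → ∀ x ∈ A, H t x ∈ A :=
    fun t h0 h1 x hx => ⟨hsum t x hx, hQ t h0 h1 x hx⟩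
  -- H 0 = id on A
  have hH0 : ∀ x ∈ A, H 0 x = x := by
    intro x hx
    have hc0 : c 0 x = x := by
      funext i
      by_cases h : 0 ≤ ν i <;> simp [c, h]
    funext i
    show c 0 x i / Real.sqrt (S 0 x) = x i
    have : S 0 x = 1 := by
      show ∑ i, c 0 x i ^ 2 = 1
      rw [hc0]; exact hx.1
    rw [hc0, this, Real.sqrt_one, div_one]
  -- H 1 maps into T
  have hH1T : ∀ x ∈ A, H 1 x ∈ T := by
    intro x hx
    refine ⟨fun i hi => ?_, hsum 1 x hx⟩
    show c 1 x i / Real.sqrt (S 1 x) = 0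
    have : c 1 x i = 0 := by simp [c, hi]
    rw [this, zero_div]
  -- T ⊆ A
  have hTA : ∀ x ∈ T, x ∈ A := by
    intro x hx
    refine ⟨hx.2, Finset.sum_nonneg fun i _ => ?_⟩
    by_cases h : 0 ≤ ν i
    · exact mul_nonneg h (sq_nonneg _)
    · rw [hx.1 i h]; simp
  -- H fixes T pointwise
  have hfix : ∀ (t : ℝ), ∀ x ∈ T, H t x = x := by
    intro t x hx
    have hct : c t x = x := by
      funext i
      by_cases h : 0 ≤ ν i
      · simp [c, h]
      · simp [c, h, hx.1 i h]
    funext i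
    show c t x i / Real.sqrt (S t x) = x i
    have : S t x = 1 := by
      show ∑ i, c t x i ^ 2 = 1
      rw [hct]; exact hx.2
    rw [hct, this, Real.sqrt_one, div_one]
  -- continuity
  have contc : ∀ i, Continuous fun p : ℝ × A => c p.1 p.2.1 i := by
    intro i
    by_cases h : 0 ≤ ν i
    · simp only [c, if_pos h]
      exact (continuous_apply i).comp (continuous_subtype_val.comp continuous_snd)
    · simp only [c, if_neg h]
      exact ((continuous_const.sub continuous_fst)).mul
        ((continuous_apply i).comp (continuous_subtype_val.comp continuous_snd))
  have contS : Continuous fun p : ℝ × A => S p.1 p.2.1 := by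
    apply continuous_finset_sum
    intro i _
    exact (contc i).pow 2
  have contH : Continuous fun p : ℝ × A => H p.1 p.2.1 := by
    apply continuous_pi
    intro i
    apply (contc i).div (Real.continuous_sqrt.comp contS)
    intro p
    exact Real.sqrt_ne_zero'.mpr (hSt p.1 p.2.1 p.2.2)
  -- the retraction and inclusion
  let r : C(A, T) := ⟨fun x => ⟨H 1 x.1, hH1T x.1 x.2⟩, by
    apply Continuous.subtype_mk
    exact contH.comp (continuous_const.prodMk continuous_id)⟩
  let incl : C(T, A) := ⟨fun x => ⟨x.1, hTA x.1 x.2⟩, by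
    apply Continuous.subtype_mk
    exact continuous_subtype_val⟩
  refine ⟨{ toFun := r, invFun := incl, left_inv := ⟨?_⟩, right_inv := ?_ }⟩
  · -- homotopy from incl ∘ r to id
    refine
      { toContinuousMap := ⟨fun p => ⟨H (1 - (p.1 : ℝ)) p.2.1,
          hmemA _ (by linarith [p.1.2.2]) (by linarith [p.1.2.1]) p.2.1 p.2.2⟩, ?_⟩,
        map_zero_left := ?_, map_one_left := ?_ }
    · apply Continuous.subtype_mk
      exact contH.comp
        (((continuous_const.sub continuous_subtype_val).comp continuous_fst).prodMk
          continuous_snd)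
    · intro x
      apply Subtype.ext
      show H (1 - ((0 : unitInterval) : ℝ)) x.1 = (incl (r x)).1
      have h10 : (1:ℝ) - ((0 : unitInterval) : ℝ) = 1 := by norm_num
      rw [h10]
      rfl
    · intro x
      apply Subtype.ext
      show H (1 - ((1 : unitInterval) : ℝ)) x.1 = x.1
      have h11 : (1:ℝ) - ((1 : unitInterval) : ℝ) = 0 := by norm_num
      rw [h11]
      exact hH0 x.1 x.2
  · have heq : r.comp incl = ContinuousMap.id T :=
      ContinuousMap.ext fun x => Subtype.ext (hfix 1 x.1 x.2)
    rw [heq]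

open Matrix
/-- Let `Q(x) = ⟨Mx, x⟩` be a real quadratic form on `ℝ^{k+1}` whose (real, symmetric)
matrix `M` has eigenvalues `λ₀ ≤ ⋯ ≤ λ_k` (with multiplicity, characterized by the
characteristic polynomial).  If `λ_j ≥ 0` while `λ_i < 0` for all `i < j`, then
`{x ∈ S^k : Q(x) ≥ 0}` is homotopy equivalent to the sphere `S^{k-j}`. -/
theorem stmt7 {k : ℕ} (M : Matrix (Fin (k + 1)) (Fin (k + 1)) ℝ) (hsym : M.IsSymm)
    (lam : Fin (k + 1) → ℝ) (hmono : Monotone lam)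
    (heig : M.charpoly = ∏ i, (Polynomial.X - Polynomial.C (lam i)))
    (j : Fin (k + 1)) (hj : 0 ≤ lam j) (hj' : ∀ i, i < j → lam i < 0) :
    Nonempty
      (ContinuousMap.HomotopyEquiv
        {x : Fin (k + 1) → ℝ | ∑ i, x i ^ 2 = 1 ∧ 0 ≤ x ⬝ᵥ M.mulVec x}
        (Metric.sphere (0 : EuclideanSpace ℝ (Fin (k - (j : ℕ) + 1))) 1)) := by
  classical
  have hM : M.IsHermitian := (Matrix.conjTranspose_eq_transpose_of_trivial M).trans hsym
  set ν : Fin (k + 1) → ℝ := hM.eigenvalues with hν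
  set U : Matrix (Fin (k + 1)) (Fin (k + 1)) ℝ := ((Matrix.IsHermitian.eigenvectorUnitary hM : unitaryGroup (Fin (k + 1)) ℝ) : Matrix (Fin (k + 1)) (Fin (k + 1)) ℝ) with hU
  have hUU : U * star U = 1 :=
    Matrix.mem_unitaryGroup_iff.mp (Matrix.IsHermitian.eigenvectorUnitary hM).2
  have hUU' : star U * U = 1 :=
    Matrix.mem_unitaryGroup_iff'.mp (Matrix.IsHermitian.eigenvectorUnitary hM).2
  have hsp : M = U * Matrix.diagonal ν * star U := by
    have := hM.spectral_theorem
    simpa using this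
  -- charpoly identification
  have hcp : (∏ i, (Polynomial.X - Polynomial.C (ν i))) = ∏ i, (Polynomial.X - Polynomial.C (lam i)) := by
    rw [← charpoly_diagonal_aux ν, ← heig]
    conv_rhs => rw [hsp]
    exact (charpoly_conj_aux U (star U) (Matrix.diagonal ν) hUU).symm
  have hcard : (Finset.univ.filter fun i => 0 ≤ ν i).card = k - (j : ℕ) + 1 := by
    rw [count_aux ν lam hcp]
    exact lam_count lam hmono j hj hj'
  -- the change-of-coordinates homeomorphism
  have contmul : ∀ B : Matrix (Fin (k + 1)) (Fin (k + 1)) ℝ,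
      Continuous fun x : Fin (k + 1) → ℝ => B *ᵥ x := by
    intro B
    exact (Matrix.mulVecLin B).continuous_of_finiteDimensional
  let φ : (Fin (k + 1) → ℝ) ≃ₜ (Fin (k + 1) → ℝ) :=
    { toFun := fun x => star U *ᵥ x
      invFun := fun y => U *ᵥ y
      left_inv := fun x => by show U *ᵥ (star U *ᵥ x) = x; rw [Matrix.mulVec_mulVec, hUU, Matrix.one_mulVec]
      right_inv := fun y => by show star U *ᵥ (U *ᵥ y) = y; rw [Matrix.mulVec_mulVec, hUU', Matrix.one_mulVec]
      continuous_toFun := contmul (star U)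
      continuous_invFun := contmul U }
  have hstar : star U = Uᵀ := (Matrix.conjTranspose_eq_transpose_of_trivial U)
  have hnorm : ∀ x : Fin (k + 1) → ℝ, ∑ i, (star U *ᵥ x) i ^ 2 = ∑ i, x i ^ 2 := by
    intro x
    have h1 : (star U *ᵥ x) ⬝ᵥ (star U *ᵥ x) = x ⬝ᵥ x := by
      rw [Matrix.dotProduct_mulVec, hstar, ← Matrix.mulVec_transpose]
      rw [Matrix.transpose_transpose, Matrix.mulVec_mulVec, ← hstar, hUU, Matrix.one_mulVec]
    simpa [dotProduct, sq] using h1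
  have hQeq : ∀ x : Fin (k + 1) → ℝ,
      x ⬝ᵥ M.mulVec x = ∑ i, ν i * (star U *ᵥ x) i ^ 2 := by
    intro x
    conv_lhs => rw [hsp]
    rw [show (U * Matrix.diagonal ν * star U) *ᵥ x
        = U *ᵥ (Matrix.diagonal ν *ᵥ (star U *ᵥ x)) by
      rw [Matrix.mulVec_mulVec, Matrix.mulVec_mulVec]]
    rw [Matrix.dotProduct_mulVec (v := x) (A := U)]
    rw [show x ᵥ* U = star U *ᵥ x by rw [hstar, Matrix.mulVec_transpose]]
    simp only [dotProduct, Matrix.mulVec_diagonal]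
    exact Finset.sum_congr rfl fun i _ => by ring
  have h_iff : ∀ x : Fin (k + 1) → ℝ,
      (∑ i, x i ^ 2 = 1 ∧ 0 ≤ x ⬝ᵥ M.mulVec x) ↔
      (∑ i, (φ x) i ^ 2 = 1 ∧ 0 ≤ ∑ i, ν i * (φ x) i ^ 2) := by
    intro x
    constructor
    · rintro ⟨h1, h2⟩
      exact ⟨by rw [show φ x = star U *ᵥ x from rfl, hnorm, h1],
        by rw [show φ x = star U *ᵥ x from rfl, ← hQeq]; exact h2⟩
    · rintro ⟨h1, h2⟩
      refine ⟨?_, ?_⟩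
      · rw [← hnorm x]; exact h1
      · rw [hQeq x]; exact h2
  obtain ⟨h1⟩ := A_htpy ν
  obtain ⟨h2⟩ := T_homeo ν hcard
  exact ⟨((φ.subtype h_iff).toHomotopyEquiv.trans h1).trans h2.toHomotopyEquiv⟩
end
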